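/- Let n ≥ 2 be a natural number, let s be a natural number with 0 ≤ s ≤ n−2, set β := (s+1)/n (so 0 < β < 1), let a be a complex number and let x > 0 be a real number. Then the Riemann–Liouville fractional derivative of order β of J_s(·, a) at x, namely the derivative at x of the function y ↦ (1/Γ(1−β)) · ∫_0^y (y−t)^{−β} · J_s(t, a) dt, equals a · e^{a x}. -/

import Mathlib

/-- `J_s(x, a) = ∑_{k=0}^∞ a^k · x^{k + β − 1} / Γ(k + β)` with `β = (s+1)/n`. -/
noncomputable def Js (n s : ℕ) (x : ℝ) (a : ℂ) : ℂ :=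
  ∑' k : ℕ, a ^ k * ((x ^ ((k : ℝ) + ((s : ℝ) + 1) / (n : ℝ) - 1) : ℝ) : ℂ) /
    ((Real.Gamma ((k : ℝ) + ((s : ℝ) + 1) / (n : ℝ)) : ℝ) : ℂ)

open MeasureTheory intervalIntegral Complex

lemma cint (β : ℝ) (h0 : 0 < β) (h1 : β < 1) (k : ℕ) {y : ℝ} (hy : 0 < y) :
    ∫ t in (0:ℝ)..y, ((t ^ ((k:ℝ) + β - 1) : ℝ) : ℂ) * (((y - t) ^ (-β) : ℝ) : ℂ)
      = (y:ℂ) ^ k * ((Real.Gamma ((k:ℝ) + β) : ℝ) : ℂ) * ((Real.Gamma (1 - β) : ℝ) : ℂ)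
        / (k.factorial : ℂ) := by
  set u : ℂ := (((k:ℝ) + β : ℝ) : ℂ) with hu
  set v : ℂ := ((1 - β : ℝ) : ℂ) with hv
  have hure : 0 < u.re := by simp [hu]; positivity
  have hvre : 0 < v.re := by simp [hv]; linarith
  have hcongr : ∫ t in (0:ℝ)..y, ((t ^ ((k:ℝ) + β - 1) : ℝ) : ℂ) * (((y - t) ^ (-β) : ℝ) : ℂ)
      = ∫ t in (0:ℝ)..y, (t:ℂ) ^ (u - 1) * ((y:ℂ) - t) ^ (v - 1) := by
    apply intervalIntegral.integral_congr
    intro t ht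
    simp only []
    rw [Set.uIcc_of_le hy.le] at ht
    rw [Complex.ofReal_cpow ht.1, Complex.ofReal_cpow (by linarith [ht.2] : (0:ℝ) ≤ y - t)]
    have e1 : (((k:ℝ) + β - 1 : ℝ) : ℂ) = u - 1 := by rw [hu]; push_cast; ring
    have e2 : ((-β : ℝ) : ℂ) = v - 1 := by rw [hv]; push_cast; ring
    rw [e1, e2, Complex.ofReal_sub]
  rw [hcongr, Complex.betaIntegral_scaled u v hy]
  have hsum : u + v = (k:ℂ) + 1 := by rw [hu, hv]; push_cast; ring
  have hbeta : Complex.betaIntegral u v = Complex.Gamma u * Complex.Gamma v / (k.factorial : ℂ) := by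
    have := Complex.Gamma_mul_Gamma_eq_betaIntegral hure hvre
    rw [hsum, Complex.Gamma_nat_eq_factorial k] at this
    have hk : (k.factorial : ℂ) ≠ 0 := by exact_mod_cast Nat.cast_ne_zero.mpr k.factorial_ne_zero
    rw [eq_div_iff hk, mul_comm (Complex.betaIntegral u v) _, ← this]
  rw [hbeta]
  have hk1 : u + v - 1 = ((k:ℕ):ℂ) := by rw [hsum]; ring
  rw [hk1, Complex.cpow_natCast]
  rw [hu, hv, Complex.Gamma_ofReal, Complex.Gamma_ofReal]
  ring

lemma rint (β : ℝ) (h0 : 0 < β) (h1 : β < 1) (k : ℕ) {y : ℝ} (hy : 0 < y) :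
    ∫ t in (0:ℝ)..y, t ^ ((k:ℝ) + β - 1) * (y - t) ^ (-β)
      = y ^ k * Real.Gamma ((k:ℝ) + β) * Real.Gamma (1 - β) / (k.factorial : ℝ) := by
  have h := cint β h0 h1 k hy
  apply Complex.ofReal_injective
  rw [← intervalIntegral.integral_ofReal]
  simp only [Complex.ofReal_mul]
  rw [h]
  push_cast
  ring

lemma iint (β : ℝ) (h0 : 0 < β) (h1 : β < 1) (k : ℕ) {y : ℝ} (hy : 0 < y) :
    IntervalIntegrable (fun t => ((t ^ ((k:ℝ) + β - 1) : ℝ) : ℂ) * (((y - t) ^ (-β) : ℝ) : ℂ))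
      MeasureTheory.volume 0 y := by
  set u : ℂ := (((k:ℝ) + β : ℝ) : ℂ) with hu
  set v : ℂ := ((1 - β : ℝ) : ℂ) with hv
  have heq : Set.EqOn (fun t : ℝ => ((t ^ ((k:ℝ) + β - 1) : ℝ) : ℂ) * (((y - t) ^ (-β) : ℝ) : ℂ))
      (fun t : ℝ => (t:ℂ) ^ (u - 1) * ((y:ℂ) - t) ^ (v - 1)) (Set.uIcc 0 y) := by
    intro t ht
    rw [Set.uIcc_of_le hy.le] at ht
    simp only []
    rw [Complex.ofReal_cpow ht.1, Complex.ofReal_cpow (by linarith [ht.2] : (0:ℝ) ≤ y - t)]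
    have e1 : (((k:ℝ) + β - 1 : ℝ) : ℂ) = u - 1 := by rw [hu]; push_cast; ring
    have e2 : ((-β : ℝ) : ℂ) = v - 1 := by rw [hv]; push_cast; ring
    rw [e1, e2, Complex.ofReal_sub]
  have hure : (-1:ℝ) < (u-1).re := by simp [hu]; positivity
  have hvre : (-1:ℝ) < (v-1).re := by simp [hv]; linarith
  have half1 : IntervalIntegrable (fun t : ℝ => (t:ℂ) ^ (u - 1) * ((y:ℂ) - t) ^ (v - 1))
      MeasureTheory.volume 0 (y/2) := by
    apply IntervalIntegrable.mul_continuousOn (intervalIntegrable_cpow' hure)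
    apply continuousOn_of_forall_continuousAt
    intro t ht
    rw [Set.uIcc_of_le (by linarith : (0:ℝ) ≤ y/2)] at ht
    apply ContinuousAt.cpow
    · exact (continuous_const.sub Complex.continuous_ofReal).continuousAt
    · exact continuousAt_const
    · have : (y:ℂ) - ↑t = ((y - t : ℝ) : ℂ) := by push_cast; ring
      rw [this]
      exact Complex.ofReal_mem_slitPlane.2 (by linarith [ht.2])
  have half2 : IntervalIntegrable (fun t : ℝ => (t:ℂ) ^ (u - 1) * ((y:ℂ) - t) ^ (v - 1))
      MeasureTheory.volume (y/2) y := by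
    have hbase : IntervalIntegrable (fun t : ℝ => ((y:ℂ) - t) ^ (v - 1))
        MeasureTheory.volume (y/2) y := by
      have h0 := (intervalIntegrable_cpow' (r := v - 1) hvre (a := 0) (b := y/2)).comp_sub_left y
      have h1 : IntervalIntegrable (fun x : ℝ => (((y - x : ℝ)) : ℂ) ^ (v - 1))
          MeasureTheory.volume (y/2) y := by
        simpa [show y - y/2 = y/2 by ring] using h0.symm
      apply h1.congr
      intro t _
      push_cast
      ring_nf
    apply hbase.continuousOn_mul
    apply continuousOn_of_forall_continuousAt
    intro t ht
    rw [Set.uIcc_of_le (by linarith : y/2 ≤ y)] at ht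
    apply ContinuousAt.cpow
    · exact Complex.continuous_ofReal.continuousAt
    · exact continuousAt_const
    · exact Complex.ofReal_mem_slitPlane.2 (by linarith [ht.1])
  have hcpow := half1.trans half2
  apply hcpow.congr
  rw [Set.uIoc_of_le hy.le]
  exact fun t ht => (heq (by rw [Set.uIcc_of_le hy.le]; exact Set.Ioc_subset_Icc_self ht)).symm

lemma key (β : ℝ) (h0 : 0 < β) (h1 : β < 1) (a : ℂ) {y : ℝ} (hy : 0 < y) :
    ((1 / Real.Gamma (1 - β) : ℝ) : ℂ) *
      ∫ t in (0:ℝ)..y, (((y - t) ^ (-β) : ℝ) : ℂ) *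
        (∑' k : ℕ, a ^ k * ((t ^ ((k:ℝ) + β - 1) : ℝ) : ℂ) / ((Real.Gamma ((k:ℝ) + β) : ℝ) : ℂ))
      = Complex.exp (a * y) := by
  have hΓpos : ∀ k : ℕ, 0 < Real.Gamma ((k:ℝ) + β) := fun k =>
    Real.Gamma_pos_of_pos (by positivity)
  have hΓ1 : 0 < Real.Gamma (1 - β) := Real.Gamma_pos_of_pos (by linarith)
  set F : ℕ → ℝ → ℂ := fun k t =>
    a ^ k / ((Real.Gamma ((k:ℝ) + β) : ℝ) : ℂ) *
      (((t ^ ((k:ℝ) + β - 1) : ℝ) : ℂ) * (((y - t) ^ (-β) : ℝ) : ℂ)) with hF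
  have hFint : ∀ k : ℕ, MeasureTheory.IntegrableOn (F k) (Set.Ioc 0 y) := by
    intro k
    rw [← intervalIntegrable_iff_integrableOn_Ioc_of_le hy.le]
    exact (iint β h0 h1 k hy).const_mul _
  have hintegrand : ∀ t : ℝ, (((y - t) ^ (-β) : ℝ) : ℂ) *
      (∑' k : ℕ, a ^ k * ((t ^ ((k:ℝ) + β - 1) : ℝ) : ℂ) / ((Real.Gamma ((k:ℝ) + β) : ℝ) : ℂ))
      = ∑' k : ℕ, F k t := by
    intro t
    rw [← tsum_mul_left]
    exact tsum_congr fun k => by rw [hF]; ring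
  have hnormval : ∀ k : ℕ, ∫ t in Set.Ioc 0 y, ‖F k t‖
      = Real.Gamma (1 - β) * ((‖a‖ * y) ^ k / (k.factorial : ℝ)) := by
    intro k
    have hpt : ∀ t ∈ Set.Ioc (0:ℝ) y, ‖F k t‖
        = ‖a‖ ^ k / Real.Gamma ((k:ℝ) + β) * (t ^ ((k:ℝ) + β - 1) * (y - t) ^ (-β)) := by
      intro t ht
      rw [hF]
      simp only [norm_mul, norm_div, norm_pow, Complex.norm_real, Real.norm_eq_abs]
      rw [abs_of_pos (hΓpos k), _root_.abs_of_nonneg (Real.rpow_nonneg ht.1.le _),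
        _root_.abs_of_nonneg (Real.rpow_nonneg (by linarith [ht.2] : (0:ℝ) ≤ y - t) _)]
    rw [MeasureTheory.setIntegral_congr_fun measurableSet_Ioc hpt,
      MeasureTheory.integral_const_mul, ← intervalIntegral.integral_of_le hy.le,
      rint β h0 h1 k hy]
    field_simp
    ring
  have hsum : Summable fun k : ℕ => ∫ t in Set.Ioc 0 y, ‖F k t‖ := by
    apply Summable.congr ((Real.summable_pow_div_factorial (‖a‖ * y)).mul_left
      (Real.Gamma (1 - β)))
    intro k
    rw [hnormval k]
  have hswap := MeasureTheory.integral_tsum_of_summable_integral_norm hFint hsum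
  have hval : ∀ k : ℕ, ∫ t in Set.Ioc 0 y, F k t
      = ((Real.Gamma (1 - β) : ℝ) : ℂ) * ((a * (y:ℂ)) ^ k / (k.factorial : ℂ)) := by
    intro k
    rw [hF]
    simp only
    rw [MeasureTheory.integral_const_mul, ← intervalIntegral.integral_of_le hy.le,
      cint β h0 h1 k hy]
    have hne : ((Real.Gamma ((k:ℝ) + β) : ℝ) : ℂ) ≠ 0 := by
      exact_mod_cast (hΓpos k).ne'
    have halg : ∀ A B G G1 f : ℂ, G ≠ 0 → A / G * (B * G * G1 / f) = G1 * (A * B / f) := by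
      intro A B G G1 f hG
      rcases eq_or_ne f 0 with rfl | hf
      · simp [div_zero]
      · field_simp
    rw [halg _ _ _ _ _ hne, mul_pow]
  rw [intervalIntegral.integral_of_le hy.le]
  calc ((1 / Real.Gamma (1 - β) : ℝ) : ℂ) * ∫ t in Set.Ioc 0 y, (((y - t) ^ (-β) : ℝ) : ℂ) *
        (∑' k : ℕ, a ^ k * ((t ^ ((k:ℝ) + β - 1) : ℝ) : ℂ) / ((Real.Gamma ((k:ℝ) + β) : ℝ) : ℂ))
      = ((1 / Real.Gamma (1 - β) : ℝ) : ℂ) * ∫ t in Set.Ioc 0 y, ∑' k : ℕ, F k t := by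
        congr 1
        exact MeasureTheory.integral_congr_ae (Filter.Eventually.of_forall fun t => hintegrand t)
    _ = ((1 / Real.Gamma (1 - β) : ℝ) : ℂ) * ∑' k : ℕ, ∫ t in Set.Ioc 0 y, F k t := by
        rw [← hswap]
    _ = ((1 / Real.Gamma (1 - β) : ℝ) : ℂ) * (((Real.Gamma (1 - β) : ℝ) : ℂ) *
          ∑' k : ℕ, (a * (y:ℂ)) ^ k / (k.factorial : ℂ)) := by
        rw [tsum_congr hval, tsum_mul_left]
    _ = ∑' k : ℕ, (a * (y:ℂ)) ^ k / (k.factorial : ℂ) := by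
        rw [← mul_assoc, ← Complex.ofReal_mul]
        rw [one_div, inv_mul_cancel₀ hΓ1.ne']
        simp
    _ = Complex.exp (a * y) := by
        rw [Complex.exp_eq_exp_ℂ, NormedSpace.exp_eq_tsum_div]

/-- The Riemann–Liouville fractional derivative of order `β ∈ (0,1)`:
`D^β f(x) = d/dx [(1/Γ(1−β)) ∫_0^x (x−t)^{−β} f(t) dt]`. The statement asserts that
`D^β J_s(·, a)` at `x` equals `a · e^{a x}`, where `β = (s+1)/n`. -/
theorem stmt_4 (n : ℕ) (hn : 2 ≤ n) (s : ℕ) (hs : s ≤ n - 2)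
    (β : ℝ) (hβ : β = ((s : ℝ) + 1) / (n : ℝ))
    (a : ℂ) (x : ℝ) (hx : 0 < x) :
    HasDerivAt
      (fun y : ℝ => ((1 / Real.Gamma (1 - β) : ℝ) : ℂ) *
        ∫ t in (0 : ℝ)..y, (((y - t) ^ (-β) : ℝ) : ℂ) * Js n s t a)
      (a * Complex.exp (a * x)) x := by
  subst hβ
  have hn0 : (0:ℝ) < (n:ℝ) := by positivity
  have h0 : 0 < ((s:ℝ) + 1) / (n:ℝ) := by positivity
  have h1 : ((s:ℝ) + 1) / (n:ℝ) < 1 := by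
    rw [div_lt_one hn0]
    have : s + 2 ≤ n := by omega
    have : ((s:ℝ)) + 2 ≤ (n:ℝ) := by exact_mod_cast this
    linarith
  have hg : HasDerivAt (fun y : ℝ => Complex.exp (a * (y:ℝ))) (a * Complex.exp (a * x)) x := by
    have hlin : HasDerivAt (fun y : ℝ => (a * (y:ℂ))) a x := by
      simpa using (Complex.ofRealCLM.hasDerivAt (x := x)).const_mul a
    simpa [mul_comm] using hlin.cexp
  apply hg.congr_of_eventuallyEq
  filter_upwards [Ioi_mem_nhds hx] with y hy
  simp only [Js]
  exact key _ h0 h1 a hy
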